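/- Let C be a linear [n,k,d] rank-metric code over F_{q^m} with parity-check matrix H. Let E ∈ F_{q^m}^{ℓ×n} with F_q-rank t < d, let B ∈ F_q^{t×n} be a matrix whose rows form a basis of rank support of E, and let S = H·Eᵀ. Then the linear system S = (H·Bᵀ)·Aᵀ has a unique solution A ∈ F_{q^m}^{ℓ×t}, and this solution satisfies E = A·B. -/

import Mathlib

open Matrix

noncomputable def extV {K L : Type} [Field K] [Field L] [Algebra K L]
    {m n : ℕ} (γ : Module.Basis (Fin m) K L) (v : Fin n → L) : Matrix (Fin m) (Fin n) K :=
  Matrix.of fun i j => γ.repr (v j) i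

noncomputable def extM {K L : Type} [Field K] [Field L] [Algebra K L]
    {m n : ℕ} {ι : Type} (γ : Module.Basis (Fin m) K L) (E : Matrix ι (Fin n) L) :
    Matrix (ι × Fin m) (Fin n) K :=
  Matrix.of fun p j => γ.repr (E p.1 j) p.2

/-- erasure decoding: let `H` be a full-rank parity-check matrix of a linear
`[n,k,d]` rank-metric code over `F_{q^m}`, `E ∈ F_{q^m}^{ℓ×n}` of `F_q`-rank `t < d`,
`B ∈ F_q^{t×n}` a basis matrix of the rank support of `E`, and `S = H·Eᵀ`. Then the linear
system `S = (H·Bᵀ)·Aᵀ` has a unique solution `A ∈ F_{q^m}^{ℓ×t}`, and this solution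
satisfies `E = A·B`. -/
theorem erasure_decoding_unique {q m n k d ℓ t : ℕ} (K L : Type) [Field K] [Fintype K]
    [Field L] [Fintype L] [Algebra K L] (hK : Fintype.card K = q) (hL : Fintype.card L = q ^ m)
    (γ : Module.Basis (Fin m) K L)
    (H : Matrix (Fin (n - k)) (Fin n) L) (hH : H.rank = n - k)
    (hd : ∀ v : Fin n → L, H.mulVec v = 0 → v ≠ 0 → d ≤ (extV γ v).rank)
    (hd' : ∃ v : Fin n → L, H.mulVec v = 0 ∧ v ≠ 0 ∧ (extV γ v).rank = d)
    (E : Matrix (Fin ℓ) (Fin n) L) (ht : (extM γ E).rank = t) (htd : t < d)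
    (B : Matrix (Fin t) (Fin n) K) (hBrk : B.rank = t)
    (hBsupp : Submodule.span K (Set.range B) = Submodule.span K (Set.range (extM γ E))) :
    (∃! A : Matrix (Fin ℓ) (Fin t) L,
        H * Eᵀ = H * (B.map (algebraMap K L))ᵀ * Aᵀ) ∧
      ∀ A : Matrix (Fin ℓ) (Fin t) L,
        H * Eᵀ = H * (B.map (algebraMap K L))ᵀ * Aᵀ → E = A * B.map (algebraMap K L) := by
  classical
  set Bm : Matrix (Fin t) (Fin n) L := B.map (algebraMap K L) with hBm
  -- finrank of row span of B is t
  have hspanB : Module.finrank K (Submodule.span K (Set.range B)) = t := by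
    have := Matrix.rank_eq_finrank_span_row B; rw [hBrk] at this; exact this.symm
  -- rows of B are K-linearly independent
  have hBli : LinearIndependent K B := by
    show LinearIndependent K B.row
    exact linearIndependent_iff_card_eq_finrank_span.mpr (by rw [Set.finrank]; exact (Fintype.card_fin t).trans hspanB.symm)
  -- rows of Bm are L-linearly independent
  have hBmli : LinearIndependent L Bm := by
    show LinearIndependent L Bm.row
    rw [Fintype.linearIndependent_iff]
    intro g hg s
    have h0 : ∀ r : Fin m, ∑ s : Fin t, (γ.repr (g s) r) • B s = 0 := by
      intro r
      funext j
      have hj : ∑ s : Fin t, g s * algebraMap K L (B s j) = 0 := by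
        have := congrFun hg j
        simpa [Bm, Matrix.map_apply, Finset.sum_apply] using this
      have key : ∀ s : Fin t, γ.repr (g s * algebraMap K L (B s j)) r
          = γ.repr (g s) r * B s j := by
        intro s
        have h1 : g s * algebraMap K L (B s j) = (B s j) • (g s) := by
          rw [Algebra.smul_def, mul_comm]
        rw [h1, LinearEquiv.map_smul]
        simp [mul_comm]
      have h2 : γ.repr (∑ s : Fin t, g s * algebraMap K L (B s j)) r = 0 := by
        rw [hj]; simp
      rw [map_sum, Finsupp.coe_finset_sum, Finset.sum_apply] at h2
      simp only [key] at h2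
      simpa [Finset.sum_apply, smul_eq_mul] using h2
    have hrepr : γ.repr (g s) = 0 := by
      ext r
      exact Fintype.linearIndependent_iff.mp hBli _ (h0 r) s
    have := congrArg γ.repr.symm hrepr
    simpa using this
  -- membership transfer: K-span of B maps into L-span of Bm
  have hmap : ∀ w : Fin n → K, w ∈ Submodule.span K (Set.range B) →
      (fun j => algebraMap K L (w j)) ∈ Submodule.span L (Set.range Bm) := by
    intro w hw
    obtain ⟨c, hc⟩ := (Submodule.mem_span_range_iff_exists_fun K).mp hw
    refine (Submodule.mem_span_range_iff_exists_fun L).mpr ⟨fun s => algebraMap K L (c s), ?_⟩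
    funext j
    have := congrFun hc j
    simp only [Finset.sum_apply, Pi.smul_apply, smul_eq_mul] at this ⊢
    rw [← this]
    simp [Bm, Matrix.map_apply, map_sum]
  -- rows of extM γ E lie in span of B
  have hEsupp : ∀ p : (Fin ℓ) × (Fin m), (extM γ E) p ∈ Submodule.span K (Set.range B) := by
    intro p
    rw [hBsupp]
    exact Submodule.subset_span ⟨p, rfl⟩
  -- Key step: any solution A satisfies E = A * Bm
  have keyC : ∀ A : Matrix (Fin ℓ) (Fin t) L,
      H * Eᵀ = H * Bmᵀ * Aᵀ → E = A * Bm := by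
    intro A hA
    set D : Matrix (Fin ℓ) (Fin n) L := E - A * Bm with hD
    have hHD : H * Dᵀ = 0 := by
      rw [hD, Matrix.transpose_sub, Matrix.mul_sub, Matrix.transpose_mul, hA,
        Matrix.mul_assoc, sub_self]
    have hrow : ∀ i : Fin ℓ, D i = 0 := by
      intro i
      by_contra hne
      have hmv : H.mulVec (D i) = 0 := by
        funext r
        have := congrFun (congrFun hHD r) i
        simpa [Matrix.mul_apply, Matrix.mulVec, dotProduct, Matrix.transpose_apply] using this
      have hdle : (d : ℕ) ≤ (extV γ (D i)).rank := hd _ hmv hne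
      -- rows of extV γ (D i) lie in span K (range B)
      have hrows : ∀ r : Fin m, (extV γ (D i)) r ∈ Submodule.span K (Set.range B) := by
        intro r
        have heq : (extV γ (D i)) r = (extM γ E) (i, r)
            - ∑ s : Fin t, (γ.repr (A i s) r) • B s := by
          funext j
          have hDij : D i j = E i j - ∑ s : Fin t, A i s * algebraMap K L (B s j) := by
            simp [hD, Matrix.sub_apply, Matrix.mul_apply, Bm, Matrix.map_apply]
          have key : ∀ s : Fin t, γ.repr (A i s * algebraMap K L (B s j)) r
              = γ.repr (A i s) r * B s j := by
            intro s
            have h1 : A i s * algebraMap K L (B s j) = (B s j) • (A i s) := by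
              rw [Algebra.smul_def, mul_comm]
            rw [h1, LinearEquiv.map_smul]
            simp [mul_comm]
          simp only [extV, extM, Matrix.of_apply, hDij, map_sub, map_sum,
            Finsupp.coe_sub, Finsupp.coe_finset_sum, Pi.sub_apply, Finset.sum_apply,
            key, Pi.smul_apply, smul_eq_mul]
        rw [heq]
        exact Submodule.sub_mem _ (hEsupp (i, r))
          (Submodule.sum_mem _ fun s _ => Submodule.smul_mem _ _
            (Submodule.subset_span ⟨s, rfl⟩))
      have hle : (extV γ (D i)).rank ≤ t := by
        rw [Matrix.rank_eq_finrank_span_row]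
        calc Module.finrank K (Submodule.span K (Set.range (extV γ (D i))))
            ≤ Module.finrank K (Submodule.span K (Set.range B)) :=
              Submodule.finrank_mono (Submodule.span_le.mpr (Set.range_subset_iff.mpr hrows))
          _ = t := hspanB
      omega
    have : D = 0 := by
      funext i j
      exact congrFun (hrow i) j
    rw [hD] at this
    have := sub_eq_zero.mp this
    exact this
  -- existence of a solution
  have hex : ∃ A₀ : Matrix (Fin ℓ) (Fin t) L, E = A₀ * Bm := by
    have hrowE : ∀ i : Fin ℓ, E i ∈ Submodule.span L (Set.range Bm) := by
      intro i
      have hexp : E i = ∑ r : Fin m, (γ r) • (fun j => algebraMap K L ((extM γ E) (i, r) j)) := by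
        funext j
        have := (γ.sum_repr (E i j)).symm
        simpa [extM, Finset.sum_apply, Algebra.smul_def, mul_comm, smul_eq_mul] using this
      rw [hexp]
      exact Submodule.sum_mem _ fun r _ => Submodule.smul_mem _ _ (hmap _ (hEsupp (i, r)))
    choose c hc using fun i => (Submodule.mem_span_range_iff_exists_fun L).mp (hrowE i)
    refine ⟨Matrix.of c, ?_⟩
    funext i j
    have := congrFun (hc i) j
    simp only [Finset.sum_apply, Pi.smul_apply, smul_eq_mul] at this
    simp [Matrix.mul_apply, ← this]
  obtain ⟨A₀, hA₀⟩ := hex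
  have hA₀sol : H * Eᵀ = H * Bmᵀ * A₀ᵀ := by
    rw [hA₀, Matrix.transpose_mul, Matrix.mul_assoc]
  refine ⟨⟨A₀, hA₀sol, ?_⟩, keyC⟩
  intro A hA
  have h1 : A * Bm = A₀ * Bm := by rw [← keyC A hA, ← hA₀]
  -- cancel Bm using linear independence of its rows
  funext i s
  have hrow : ∑ u : Fin t, (A i u - A₀ i u) • Bm u = 0 := by
    funext j
    have := congrFun (congrFun h1 i) j
    simp only [Matrix.mul_apply] at this
    simp [Finset.sum_apply, sub_mul, Finset.sum_sub_distrib, this]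
  have := Fintype.linearIndependent_iff.mp hBmli _ hrow s
  exact sub_eq_zero.mp this
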